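/- Let ŵ be an element of finite order in the stabilizer Ŵ_*[ξ], with ŵ² = 1, such that X_{α̃}(q^ξ) ≠ 1 for all α̃ ∈ λ(ŵ). Then μ_•(ŵ) = ∏_{[α,ν_α j] ∈ λ(ŵ)} (t_α^{−1/2} − q_α^j t_α^{1/2} X_α(q^ξ)) / (t_α^{1/2} − q_α^j t_α^{−1/2} X_α(q^ξ)) = 1. The key mechanism: since ŵ(q^ξ) = q^ξ and λ(ŵ) = −ŵ(λ(ŵ)), the factors pair off as α̃ ↔ −ŵ(α̃) with X-values inverse to each other, and each pair of factors multiplies to 1; factors with X_{α̃}(q^ξ) = −1 individually equal 1. -/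

import Mathlib

open scoped RealInnerProductSpace Pointwise BigOperators

noncomputable section

/-- Euclidean `n`-space, the ambient space of the root system. -/
abbrev V (n : ℕ) := EuclideanSpace ℝ (Fin n)

/-- An element `w ∘ b'` of the extended affine Weyl group `Ŵ = W ⋉ P'`:
`w` is the (finite) Weyl-group part, `b` the translation part. -/
structure ExtElem (n : ℕ) where
  w : V n ≃ₗᵢ[ℝ] V n
  b : V n

namespace ExtElem

variable {n : ℕ}

/-- The identity element of `Ŵ`. -/
def one : ExtElem n := ⟨LinearIsometryEquiv.refl ℝ (V n), 0⟩

/-- Multiplication in `Ŵ`: `(w₁ b₁')·(w₂ b₂') = (w₁w₂)((w₂⁻¹ b₁ + b₂)')`. -/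
def mul (x y : ExtElem n) : ExtElem n := ⟨y.w.trans x.w, y.w.symm x.b + y.b⟩

/-- Inversion in `Ŵ`. -/
def inv (x : ExtElem n) : ExtElem n := ⟨x.w.symm, -(x.w x.b)⟩

/-- The action of `Ŵ` on affine roots `[z, ζ]`:  `(w b')([z,ζ]) = [w z, ζ − (z,b)]`. -/
def act (x : ExtElem n) (p : V n × ℝ) : V n × ℝ := (x.w p.1, p.2 - ⟪p.1, x.b⟫)

/-- The affine action of `Ŵ` on `ℝⁿ`: `(w b')((z)) = w(z + b)`. -/
def affAct (x : ExtElem n) (z : V n) : V n := x.w (z + x.b)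

/-- A Weyl group element `w` viewed in `Ŵ`. -/
def we (u : V n ≃ₗᵢ[ℝ] V n) : ExtElem n := ⟨u, 0⟩

/-- A translation `b'` viewed in `Ŵ`. -/
def tr (b : V n) : ExtElem n := ⟨LinearIsometryEquiv.refl ℝ (V n), b⟩

end ExtElem

variable {n : ℕ}

/-- `ν_α = (α,α)/2`. -/
def nuv (α : V n) : ℝ := ⟪α, α⟫ / 2

/-- The coroot pairing `(b, α∨) = 2(b,α)/(α,α)`. -/
def pairv (b α : V n) : ℝ := 2 * ⟪b, α⟫ / ⟪α, α⟫

/-- The positive affine roots `R̃₊ = R₊ ∪ {[α, ν_α j] : α ∈ R, j > 0}`, realized as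
pairs `(α, m)` with `m ∈ ν_α ℤ`. -/
def AffPlus (R Rplus : Set (V n)) : Set (V n × ℝ) :=
  {p | p.1 ∈ R ∧ (∃ j : ℤ, p.2 = nuv p.1 * j) ∧ (0 < p.2 ∨ (p.2 = 0 ∧ p.1 ∈ Rplus))}

/-- `λ(ŵ) = R̃₊ ∩ ŵ⁻¹(R̃₋)`. -/
def lamSet (R Rplus : Set (V n)) (x : ExtElem n) : Set (V n × ℝ) :=
  AffPlus R Rplus ∩ {p | x.act p ∈ -AffPlus R Rplus}

/-- The length `l(ŵ) = |λ(ŵ)|`. -/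
noncomputable def len (R Rplus : Set (V n)) (x : ExtElem n) : ℕ :=
  (lamSet R Rplus x).ncard

/-- Membership in the weight lattice `P`: `(α∨, b) ∈ ℤ` for all roots. -/
def inLat (R : Set (V n)) (b : V n) : Prop :=
  ∀ α ∈ R, ∃ m : ℤ, ⟪α, b⟫ = nuv α * m

/-- Reflections `s_α`, `α ∈ R`. -/
def IsReflection (R : Set (V n)) (g : V n ≃ₗᵢ[ℝ] V n) : Prop :=
  ∃ α ∈ R, ∀ z, g z = z - pairv z α • α

/-- The Weyl group `W`, generated by the reflections `s_α`, `α ∈ R`. -/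
def Weyl (R : Set (V n)) : Subgroup (V n ≃ₗᵢ[ℝ] V n) :=
  Subgroup.closure {g | IsReflection R g}

/-- `π_b = b·u_b⁻¹ = u_b⁻¹ ∘ (u_b b)' ∈ Ŵ` for `u ∈ W`. -/
def piE (u : V n ≃ₗᵢ[ℝ] V n) (b : V n) : ExtElem n := ⟨u.symm, u b⟩

/-- `u = u_b`: the shortest element of `W` with `u(b) = b₋ ∈ P₋`, characterized by
`u(b)` antidominant together with `α ∈ λ(u) ⇒ (α, b) ≠ 0`. -/
def IsUb (R Rplus : Set (V n)) (b : V n) (u : V n ≃ₗᵢ[ℝ] V n) : Prop :=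
  u ∈ Weyl R ∧ (∀ α ∈ Rplus, ⟪u b, α⟫ ≤ 0) ∧
    ∀ α ∈ Rplus, u α ∈ -Rplus → ⟪α, b⟫ ≠ 0

end

/-- Let `ŵ` be an involution (`ŵ² = 1`) in the stabilizer `Ŵ_*[ξ]`, so that the
affine action of `ŵ` fixes `q^ξ` and `t_α^{±1} X_{α̃}(q^ξ) ≠ 1 ≠ X_{α̃}(q^ξ)` on
`λ(ŵ)`.  Then
`μ_•(ŵ) = ∏_{[α,ν_α j] ∈ λ(ŵ)} (t_α^{−1/2} − q_α^j t_α^{1/2} X_α(q^ξ)) /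
 (t_α^{1/2} − q_α^j t_α^{−1/2} X_α(q^ξ)) = 1`:
the factors pair off under `α̃ ↦ −ŵ(α̃)` with inverse `X`-values, each pair
multiplying to `1`, and factors with `X`-value `−1` individually equal `1`.
Here `q = exp(cq)`, `X_{[α,m]}(q^ξ) = q^{(α,ξ)+m}`, and `ts α = t_α^{1/2}`. -/
theorem mu_bullet_involution_eq_one (n : ℕ) (R Rplus : Set (V n))
    (hfin : R.Finite) (hR : R = Rplus ∪ (-Rplus)) (hdisj : Disjoint Rplus (-Rplus))
    (h0 : (0 : V n) ∉ R)
    (x : ExtElem n)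
    (hxR : ∀ α ∈ R, x.w α ∈ R)
    (hxb : inLat R x.b)
    (hsq : x.mul x = ExtElem.one)
    (ξ : V n) (cq : ℂ)
    -- `ŵ` stabilizes `q^ξ`
    (hfix : ∀ α ∈ R, Complex.exp (cq * ⟪x.w (ξ + x.b) - ξ, α⟫) = 1)
    -- the square roots `t_α^{1/2}`, depending only on the length of `α`
    (ts : V n → ℂ) (hts0 : ∀ α, ts α ≠ 0)
    (htsnorm : ∀ α β : V n, ⟪α, α⟫ = ⟪β, β⟫ → ts α = ts β)
    -- the values `X_{α̃}(q^ξ)`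
    (Xval : V n × ℝ → ℂ) (hXval : ∀ p, Xval p = Complex.exp (cq * (⟪p.1, ξ⟫ + p.2)))
    -- `ŵ ∈ Ŵ_*[ξ]`: `X_{α̃}(q^ξ) ≠ 1` and `t_α^{±1} X_{α̃}(q^ξ) ≠ 1` on `λ(ŵ)`
    (hstar : ∀ p ∈ lamSet R Rplus x,
      Xval p ≠ 1 ∧ Xval p ≠ ts p.1 ^ 2 ∧ ts p.1 ^ 2 * Xval p ≠ 1)
    (hlamfin : (lamSet R Rplus x).Finite) :
    ∏ p ∈ hlamfin.toFinset,
        ((ts p.1)⁻¹ - Xval p * ts p.1) / (ts p.1 - Xval p * (ts p.1)⁻¹) = 1 := by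
  classical
  have hmul := hsq
  rw [ExtElem.mul, ExtElem.one] at hmul
  have hw : x.w.trans x.w = LinearIsometryEquiv.refl ℝ (V n) := congrArg ExtElem.w hmul
  have hbb : x.w.symm x.b + x.b = 0 := congrArg ExtElem.b hmul
  have hww : ∀ z, x.w (x.w z) = z := by
    intro z
    have := DFunLike.congr_fun hw z
    simpa [LinearIsometryEquiv.trans_apply] using this
  have hsymm : ∀ z, x.w.symm z = x.w z := by
    intro z
    have h := x.w.symm_apply_apply (x.w z)
    rw [hww] at h
    exact h
  have hwb : x.w x.b = -x.b := by
    have : x.w.symm x.b = -x.b := eq_neg_of_add_eq_zero_left hbb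
    rw [← hsymm]; exact this
  have hinner : ∀ z : V n, ⟪x.w z, x.b⟫ = -⟪z, x.b⟫ := by
    intro z
    have h1 : ⟪x.w z, x.w (x.w x.b)⟫ = ⟪z, x.w x.b⟫ := x.w.inner_map_map z (x.w x.b)
    rw [hww] at h1
    rw [h1, hwb, inner_neg_right]
  have hactact : ∀ p : V n × ℝ, x.act (x.act p) = p := by
    intro p
    simp only [ExtElem.act, hww, hinner]
    ext <;> simp <;> ring
  have hactneg : ∀ p : V n × ℝ, x.act (-p) = -(x.act p) := by
    intro p
    simp only [ExtElem.act, Prod.fst_neg, Prod.snd_neg, map_neg, inner_neg_left, Prod.neg_mk]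
    ext <;> simp <;> ring
  set σ : V n × ℝ → V n × ℝ := fun p => -(x.act p) with hσ
  have hσmem : ∀ p ∈ lamSet R Rplus x, σ p ∈ lamSet R Rplus x := by
    intro p hp
    obtain ⟨hp1, hp2⟩ := hp
    simp only [Set.mem_setOf_eq, Set.mem_neg] at hp2
    constructor
    · exact hp2
    · show x.act (σ p) ∈ -AffPlus R Rplus
      rw [Set.mem_neg, hσ]
      simp only [hactneg, neg_neg, hactact]
      exact hp1
  have hσσ : ∀ p, σ (σ p) = p := by
    intro p
    simp only [hσ, hactneg, neg_neg, hactact]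
  have hXpair : ∀ p ∈ lamSet R Rplus x, Xval p * Xval (σ p) = 1 := by
    intro p hp
    have hp1 : p.1 ∈ R := hp.1.1
    have hfix' := hfix (x.w p.1) (hxR p.1 hp1)
    rw [hXval, hXval, ← Complex.exp_add, ← hfix']
    congr 1
    have hre : (⟪p.1, ξ⟫ + p.2) + (⟪(σ p).1, ξ⟫ + (σ p).2)
        = ⟪x.w (ξ + x.b) - ξ, x.w p.1⟫ := by
      have h1 : ⟪x.w (ξ + x.b), x.w p.1⟫ = ⟪ξ + x.b, p.1⟫ := x.w.inner_map_map _ _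
      simp only [hσ, ExtElem.act, Prod.fst_neg, Prod.snd_neg, inner_neg_left,
        inner_sub_left, inner_add_left, h1]
      rw [real_inner_comm ξ p.1, real_inner_comm x.b p.1, real_inner_comm ξ (x.w p.1)]
      ring
    rw [← hre]
    push_cast
    ring
  have htseq : ∀ p : V n × ℝ, ts (σ p).1 = ts p.1 := by
    intro p
    apply htsnorm
    simp only [hσ, ExtElem.act, Prod.fst_neg, inner_neg_neg]
    exact x.w.inner_map_map p.1 p.1
  have hX0 : ∀ p, Xval p ≠ 0 := by
    intro p
    rw [hXval]
    exact Complex.exp_ne_zero _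
  apply Finset.prod_involution (fun p _ => σ p)
  · intro a ha
    rw [Set.Finite.mem_toFinset] at ha
    have hXσ : Xval (σ a) = (Xval a)⁻¹ := eq_inv_of_mul_eq_one_left
      (by rw [mul_comm]; exact hXpair a ha)
    set t := ts a.1 with htdef
    have ht0 : t ≠ 0 := hts0 _
    have hu0 : Xval a ≠ 0 := hX0 a
    have hden1 : t - Xval a * t⁻¹ ≠ 0 := by
      intro h
      apply (hstar a ha).2.1
      have : t * t - Xval a = 0 := by
        field_simp at h
        linear_combination h
      rw [sq]
      linear_combination -this
    have hden2 : t - (Xval a)⁻¹ * t⁻¹ ≠ 0 := by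
      intro h
      apply (hstar a ha).2.2
      have h' : t * (Xval a * t) - 1 = 0 := by
        field_simp at h
        linear_combination h
      rw [sq]
      linear_combination h'
    rw [htseq, ← htdef, hXσ, div_mul_div_comm, div_eq_one_iff_eq (mul_ne_zero hden1 hden2)]
    field_simp
    ring
  · intro a ha hne
    rw [Set.Finite.mem_toFinset] at ha
    intro heq
    apply hne
    have hXm1 : Xval a = -1 := by
      have h1 : Xval a * Xval a = 1 := by
        have := hXpair a ha
        rwa [heq] at this
      rcases mul_self_eq_one_iff.mp h1 with h | h
      · exact absurd h (hstar a ha).1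
      · exact h
    set t := ts a.1 with htdef
    have ht0 : t ≠ 0 := hts0 _
    have hden : t - Xval a * t⁻¹ ≠ 0 := by
      rw [hXm1]
      intro h
      apply (hstar a ha).2.2
      rw [hXm1]
      have h' : t * t + 1 = 0 := by
        field_simp at h
        linear_combination h
      rw [sq]
      linear_combination -h'
    rw [div_eq_one_iff_eq hden, hXm1]
    ring
  · intro a ha
    rw [Set.Finite.mem_toFinset] at ha ⊢
    exact hσmem a ha
  · intro a _
    exact hσσ a
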